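/- arXiv:2501.04199 — 5 statements merged into one kernel-verified Lean document; each statement's English description precedes it below -/
import Mathlib

section
/- For every natural number n, let h_n be the history of length n with initial location Off and all n actions equal to reset (the action sequence i·rⁿ). Then for every k ≤ n, every history of length n reachable from h_n by at most 2k steps of the relation R has last location Off, while there exists a history of length n reachable from h_n by at most 2n+1 steps of R whose last location is On. (In epistemic terms: E^{2k} Off holds at h_n for all k ≤ n, and E^{2n+1} Off fails at h_n.) -/
/-- Transition function: reset (`false`) always yields Off (`false`),
    toggle (`true`) flips the location. -/
def step (l a : Bool) : Bool := if a then !l else false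

/-- A history: an initial location together with a list of actions. -/
abbrev Hist := Bool × List Bool

/-- The sequence of locations visited along a history (length = #actions + 1). -/
def locSeq (h : Hist) : List Bool := List.scanl step h.1 h.2

/-- The last location of a history (the final entry of `locSeq`). -/
def lastLoc (h : Hist) : Bool := List.foldl step h.1 h.2

/-- Appending an action to a history. -/
def ext (h : Hist) (a : Bool) : Hist := (h.1, h.2 ++ [a])

/-- Human indistinguishability: equal action lists. -/
def humanInd (h₁ h₂ : Hist) : Prop := h₁.2 = h₂.2

/-- AI indistinguishability: equal location sequences. -/
def aiInd (h₁ h₂ : Hist) : Prop := locSeq h₁ = locSeq h₂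

/-- The union of the two indistinguishability relations. -/
def GRel (h₁ h₂ : Hist) : Prop := humanInd h₁ h₂ ∨ aiInd h₁ h₂

/-- The history `(Off, rⁿ)`: initial location Off, then `n` reset actions. -/
def hn (n : ℕ) : Hist := (false, List.replicate n false)

/-- `reachLe k h g`: `g` is reachable from `h` by at most `k` steps of `GRel`. -/
def reachLe : ℕ → Hist → Hist → Prop
  | 0, h, g => h = g
  | k+1, h, g => reachLe k h g ∨ ∃ h', GRel h h' ∧ reachLe k h' g

lemma step_false (l : Bool) : step l false = false := rfl
lemma step_true (l : Bool) : step l true = !l := rfl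

lemma scanl_all_false : ∀ (as : List Bool), (∀ a ∈ as, a = false) →
    ∀ b ∈ List.scanl step false as, b = false := by
  intro as
  induction as with
  | nil => intro _ b hb; simpa [List.scanl] using hb
  | cons a as ih =>
    intro h b hb
    have ha : a = false := h a (by simp)
    subst ha
    simp only [List.scanl_cons, step_false, List.mem_cons] at hb
    rcases hb with hb | hb
    · exact hb
    · exact ih (fun x hx => h x (by simp [hx])) b hb

lemma core1 : ∀ (as : List Bool) (l : Bool) (p : ℕ),
    (∀ a ∈ as.drop p, a = false) →
    ∀ b ∈ (List.scanl step l as).drop (p+1), b = false := by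
  intro as
  induction as with
  | nil => intro l p _ b hb; simp [List.scanl] at hb
  | cons a as ih =>
    intro l p h b hb
    cases p with
    | zero =>
      have ha : a = false := h a (by simp)
      subst ha
      simp only [List.scanl_cons, step_false, List.drop_succ_cons, List.drop_zero] at hb
      exact scanl_all_false as (fun x hx => h x (by simp [hx])) b hb
    | succ p =>
      simp only [List.scanl_cons, List.drop_succ_cons] at hb
      exact ih (step l a) p (fun x hx => h x (by simpa using hx)) b hb

lemma core2 : ∀ (as : List Bool) (l : Bool) (q : ℕ),
    (∀ b ∈ (List.scanl step l as).drop q, b = false) →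
    ∀ a ∈ as.drop q, a = false := by
  intro as
  induction as with
  | nil => intro l q _ a ha; simp at ha
  | cons a as ih =>
    intro l q h x hx
    cases q with
    | zero =>
      have hl : l = false := h l (by cases as <;> simp [List.scanl])
      subst hl
      have hsa : step false a ∈ (List.scanl step (step false a) as) := by
        cases as <;> simp [List.scanl]
      have h2 : step false a = false := by
        apply h
        simp only [List.scanl_cons, List.drop_zero, List.mem_cons]
        exact Or.inr hsa
      have ha : a = false := by cases a; rfl; simp [step] at h2
      simp only [List.drop_zero, List.mem_cons] at hx
      rcases hx with rfl | hx
      · exact ha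
      · subst ha
        exact ih (step false false) 0 (fun b hb => h b (by
          simp only [List.scanl_cons, List.drop_zero, List.mem_cons]; exact Or.inr (by simpa using hb)))
          x (by simpa using hx)
    | succ q =>
      simp only [List.drop_succ_cons] at hx
      exact ih (step l a) q (fun b hb => h b (by simpa [List.scanl] using hb)) x hx

lemma foldl_mem_drop : ∀ (as : List Bool) (l : Bool),
    List.foldl step l as ∈ (List.scanl step l as).drop as.length := by
  intro as
  induction as with
  | nil => intro l; simp [List.scanl]
  | cons a as ih => intro l; simpa [List.scanl] using ih (step l a)

def Aok (p : ℕ) (h : Hist) : Prop := ∀ a ∈ h.2.drop p, a = false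
def Bok (q : ℕ) (h : Hist) : Prop := ∀ b ∈ (locSeq h).drop q, b = false
def EInv (m : ℕ) (h : Hist) : Prop :=
  ∃ p q, Aok p h ∧ Bok q h ∧ q ≤ p + 1 ∧ p ≤ q ∧ p + q ≤ m

lemma inv_step {h h' : Hist} {m : ℕ} (hr : GRel h h') (hi : EInv m h) : EInv (m+1) h' := by
  obtain ⟨p, q, hA, hB, hqp, hpq, hm⟩ := hi
  rcases hr with he | he
  · have hA' : Aok p h' := fun a ha => hA a (by rwa [show h.2 = h'.2 from he])
    refine ⟨p, p+1, hA', ?_, le_rfl, Nat.le_succ p, by omega⟩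
    intro b hb
    exact core1 h'.2 h'.1 p hA' b hb
  · have hB' : Bok q h' := fun b hb => hB b (by rwa [show locSeq h = locSeq h' from he])
    have hA' : Aok q h' := fun a ha => core2 h'.2 h'.1 q hB' a ha
    exact ⟨q, q, hA', hB', Nat.le_succ q, le_rfl, by omega⟩

lemma inv_mono {m m' : ℕ} {h : Hist} (hle : m ≤ m') (hi : EInv m h) : EInv m' h := by
  obtain ⟨p, q, hA, hB, h1, h2, h3⟩ := hi
  exact ⟨p, q, hA, hB, h1, h2, by omega⟩

lemma reach_inv : ∀ (m : ℕ) (h g : Hist), reachLe m h g → ∀ j, EInv j h → EInv (j + m) g := by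
  intro m
  induction m with
  | zero => intro h g hr j hj; cases hr; simpa using hj
  | succ m ih =>
    intro h g hr j hj
    rcases hr with hr | ⟨h', hg, hr⟩
    · exact inv_mono (by omega) (ih h g hr j hj)
    · have := ih h' g hr (j+1) (inv_step hg hj)
      exact inv_mono (by omega) this

lemma inv_hn (n : ℕ) : EInv 0 (hn n) := by
  refine ⟨0, 0, ?_, ?_, by omega, le_rfl, le_rfl⟩
  · intro a ha; simpa [hn] using List.eq_of_mem_replicate (List.drop_subset _ _ ha)
  · intro b hb
    exact scanl_all_false _ (fun a ha => List.eq_of_mem_replicate ha) b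
      (by simpa [locSeq, hn] using hb)

lemma inv_last {n : ℕ} {g : Hist} (hlen : g.2.length = n) (hi : EInv (2*n) g) :
    lastLoc g = false := by
  obtain ⟨p, q, hA, hB, h1, h2, h3⟩ := hi
  have hq : q ≤ n := by omega
  have hmem : lastLoc g ∈ (locSeq g).drop n := by
    have := foldl_mem_drop g.2 g.1
    rw [hlen] at this; exact this
  have hsub : (locSeq g).drop n ⊆ (locSeq g).drop q := by
    rw [show n = q + (n - q) by omega, ← List.drop_drop]
    exact List.drop_subset _ _
  exact hB _ (hsub hmem)

lemma reach_snoc : ∀ (k : ℕ) (h m g : Hist), reachLe k h m → GRel m g → reachLe (k+1) h g := by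
  intro k
  induction k with
  | zero => intro h m g hr hg; cases hr; exact Or.inr ⟨g, hg, rfl⟩
  | succ k ih =>
    intro h m g hr hg
    rcases hr with hr | ⟨h', hg', hr⟩
    · exact Or.inl (ih h m g hr hg)
    · exact Or.inr ⟨h', hg', ih h' m g hr hg⟩

lemma scanl_append : ∀ (as bs : List Bool) (l : Bool),
    List.scanl step l (as ++ bs) =
      (List.scanl step l as).dropLast ++ List.scanl step (List.foldl step l as) bs := by
  intro as
  induction as with
  | nil => intro bs l; simp [List.scanl]
  | cons a as ih =>
    intro bs l
    have hne : List.scanl step (step l a) as ≠ [] := by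
      intro h
      have := congrArg List.length h
      simp [List.length_scanl] at this
    rw [List.cons_append, List.scanl_cons, List.scanl_cons]
    rw [ih]
    show _ = (l :: List.scanl step (step l a) as).dropLast ++ _
    rw [List.dropLast_cons_of_ne_nil hne, List.cons_append]
    rfl

lemma foldl_rep_true : ∀ (m : ℕ) (l : Bool),
    List.foldl step l (List.replicate m true) = xor l (Nat.bodd m) := by
  intro m
  induction m with
  | zero => intro l; simp
  | succ m ih =>
    intro l
    rw [List.replicate_succ, List.foldl_cons, step_true, ih, Nat.bodd_succ]
    cases l <;> cases Nat.bodd m <;> rfl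

lemma locSeq_step (j k : ℕ) :
    locSeq (Nat.bodd (j+1), List.replicate j true ++ List.replicate (k+1) false)
      = locSeq (Nat.bodd (j+1), List.replicate (j+1) true ++ List.replicate k false) := by
  have hfold : List.foldl step (Nat.bodd (j+1)) (List.replicate j true) = true := by
    rw [foldl_rep_true, Nat.bodd_succ]
    cases Nat.bodd j <;> rfl
  have hrw : List.replicate (j+1) true ++ List.replicate k false
      = List.replicate j true ++ (true :: List.replicate k false) := by
    rw [List.replicate_succ', List.append_assoc]; rfl
  have hrw2 : List.replicate (k+1) false = false :: List.replicate k false := by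
    rw [List.replicate_succ]
  show List.scanl step _ _ = List.scanl step _ _
  rw [hrw, hrw2, scanl_append, scanl_append, hfold]
  rfl

lemma path (n : ℕ) : ∀ j, j ≤ n →
    reachLe (2*j) (hn n) (Nat.bodd j, List.replicate j true ++ List.replicate (n-j) false) := by
  intro j
  induction j with
  | zero =>
    intro _
    show reachLe 0 _ _
    simp [hn, reachLe]
  | succ j ih =>
    intro hj
    have h1 := ih (by omega)
    have s1 : GRel (Nat.bodd j, List.replicate j true ++ List.replicate (n-j) false)
        (Nat.bodd (j+1), List.replicate j true ++ List.replicate (n-j) false) := Or.inl rfl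
    have r1 := reach_snoc _ _ _ _ h1 s1
    have s2 : GRel (Nat.bodd (j+1), List.replicate j true ++ List.replicate (n-j) false)
        (Nat.bodd (j+1), List.replicate (j+1) true ++ List.replicate (n-(j+1)) false) := by
      right
      show locSeq _ = locSeq _
      rw [show n - j = (n - (j+1)) + 1 by omega]
      exact locSeq_step j (n-(j+1))
    have r2 := reach_snoc _ _ _ _ r1 s2
    rw [show 2*(j+1) = 2*j + 1 + 1 by ring]
    exact r2

/-- at `hn n`, `E^{2k} Off` holds for all `k ≤ n`,
    while `E^{2n+1} Off` fails. -/
theorem stmt0 (n : ℕ) :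
    (∀ k ≤ n, ∀ g : Hist, g.2.length = n → reachLe (2 * k) (hn n) g →
      lastLoc g = false) ∧
    (∃ g : Hist, g.2.length = n ∧ reachLe (2 * n + 1) (hn n) g ∧
      lastLoc g = true) := by
  constructor
  · intro k hk g hlen hr
    have h1 := reach_inv (2*k) (hn n) g hr 0 (inv_hn n)
    exact inv_last hlen (inv_mono (by omega) h1)
  · refine ⟨(Nat.bodd (n+1), List.replicate n true), by simp, ?_, ?_⟩
    · have h1 := path n n le_rfl
      rw [Nat.sub_self] at h1
      simp only [List.replicate_zero, List.append_nil] at h1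
      have s : GRel (Nat.bodd n, List.replicate n true)
          (Nat.bodd (n+1), List.replicate n true) := Or.inl rfl
      exact reach_snoc _ _ _ _ h1 s
    · show lastLoc _ = true
      rw [lastLoc]
      simp only [foldl_rep_true, Nat.bodd_succ]
      cases Nat.bodd n <;> rfl
end

section
/- For every natural number n, the minimal number of R-steps needed to reach, from the history h_n = (Off, rⁿ), some history of length n whose last location is On is exactly 2n+1: there is a chain h_n = g₀ R g₁ R … R g_{2n+1} with last g_{2n+1} = On, and every chain from h_n to a history with last location On has length at least 2n+1. -/
/- ### Auxiliary lemmas -/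

lemma scanl_concat : ∀ (as : List Bool) (b c : Bool),
    List.scanl step b (as ++ [c]) = List.scanl step b as ++ [step (List.foldl step b as) c] := by
  intro as
  induction as with
  | nil => intro b c; simp [List.scanl]
  | cons a as ih => intro b c; simp [List.scanl_cons, List.foldl_cons, ih]

lemma scanl_inj : ∀ (as as' : List Bool) (b b' : Bool),
    List.scanl step b as = List.scanl step b' as' →
    b = b' ∧ as.length = as'.length ∧ List.foldl step b as = List.foldl step b' as' := by
  intro as
  induction as with
  | nil =>
    intro as' b b' h
    cases as' with
    | nil => simp_all [List.scanl]
    | cons a as' =>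
      exfalso
      have := congrArg List.length h
      simp [List.length_scanl] at this
  | cons a as ih =>
    intro as' b b' h
    cases as' with
    | nil =>
      exfalso
      have := congrArg List.length h
      simp [List.length_scanl] at this
    | cons a' as'' =>
      simp only [List.scanl_cons, List.singleton_append, List.cons.injEq] at h
      obtain ⟨hb, ht⟩ := h
      obtain ⟨_, hlen, hf⟩ := ih as'' (step b a) (step b' a') ht
      subst hb
      exact ⟨rfl, by simp [hlen], by simpa using hf⟩

lemma foldl_false : ∀ (as : List Bool) (b b' : Bool), false ∈ as →
    List.foldl step b as = List.foldl step b' as := by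
  intro as
  induction as with
  | nil => intro b b' h; simp at h
  | cons a as ih =>
    intro b b' h
    cases a with
    | false => simp [step]
    | true =>
      have hf : false ∈ as := by simpa using h
      simpa using ih (step b true) (step b' true) hf

lemma foldl_replicate_false : ∀ (k : ℕ) (b : Bool),
    List.foldl step b (List.replicate (k+1) false) = false := by
  intro k
  induction k with
  | zero => intro b; simp [step]
  | succ k ih =>
    intro b
    rw [List.replicate_succ, List.foldl_cons]
    exact ih _

lemma bit_succ (j : ℕ) : decide ((j+1) % 2 = 0) = !decide (j % 2 = 0) := by
  rw [decide_eq_decide.mpr (show ((j+1) % 2 = 0) ↔ ¬(j % 2 = 0) by omega), decide_not]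

lemma step_not_true (b : Bool) : step (!b) true = b := by simp [step]

lemma chain_ai : ∀ (j k : ℕ),
    List.scanl step (decide (j % 2 = 0)) (List.replicate j true ++ List.replicate (k+1) false)
  = List.scanl step (decide (j % 2 = 0)) (List.replicate (j+1) true ++ List.replicate k false) := by
  intro j
  induction j with
  | zero =>
    intro k
    simp [List.replicate_succ, List.scanl_cons, step]
  | succ j ih =>
    intro k
    rw [List.replicate_succ (n := j), show j+1+1 = (j+1)+1 from rfl,
      List.replicate_succ (n := j+1)]
    simp only [List.cons_append, List.scanl_cons, bit_succ, step_not_true]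
    rw [List.replicate_succ (n := j)] at ih ⊢
    exact congrArg _ (ih k)

lemma foldl_alt : ∀ j : ℕ, List.foldl step (decide (j % 2 = 0)) (List.replicate j true) = true := by
  intro j
  induction j with
  | zero => simp
  | succ j ih =>
    rw [List.replicate_succ, List.foldl_cons, bit_succ, step_not_true]
    exact ih

lemma ai_decomp (F₁ F₂ : List Bool) (b₁ b₂ c₁ c₂ : Bool) (hlen : F₁.length = F₂.length)
    (h : List.scanl step b₁ (F₁ ++ [c₁]) = List.scanl step b₂ (F₂ ++ [c₂])) :
    List.scanl step b₁ F₁ = List.scanl step b₂ F₂ ∧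
      step (List.foldl step b₁ F₁) c₁ = step (List.foldl step b₂ F₂) c₂ := by
  rw [scanl_concat, scanl_concat] at h
  have := List.append_inj h (by simp [List.length_scanl, hlen])
  exact ⟨this.1, by simpa using this.2⟩

/-- The lower bound. -/
lemma lower : ∀ (n m : ℕ) (g : ℕ → Hist), g 0 = hn n →
    (∀ i < m, GRel (g i) (g (i + 1))) →
    lastLoc (g m) = true → 2 * n + 1 ≤ m := by
  intro n
  induction n with
  | zero =>
    intro m g h0 hstep hlast
    rcases Nat.eq_zero_or_pos m with rfl | hm
    · rw [h0] at hlast; simp [hn, lastLoc] at hlast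
    · omega
  | succ n ih =>
    intro m g h0 hstep hlast
    classical
    have hlen : ∀ i, i ≤ m → (g i).2.length = n + 1 := by
      intro i
      induction i with
      | zero => intro _; rw [h0]; simp [hn]
      | succ i ihi =>
        intro hi
        have h1 := ihi (by omega)
        rcases hstep i (by omega) with hh | ha
        · rw [← hh]; exact h1
        · have := (scanl_inj _ _ _ _ ha).2.1
          omega
    -- decomposition helper
    have hdec : ∀ i, i ≤ m → ∃ (F : List Bool) (c : Bool), (g i).2 = F ++ [c] ∧ F.length = n := by
      intro i hi
      rcases List.eq_nil_or_concat ((g i).2) with h | ⟨F, c, h⟩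
      · exfalso; have := hlen i hi; rw [h] at this; simp at this
      · refine ⟨F, c, by simpa using h, ?_⟩
        have := hlen i hi
        rw [show (g i).2 = F ++ [c] from by simpa using h] at this
        simp at this; omega
    -- m₀ : first time lastLoc is true
    have hex : ∃ i, lastLoc (g i) = true := ⟨m, hlast⟩
    have hm₀P : lastLoc (g (Nat.find hex)) = true := Nat.find_spec hex
    set m₀ := Nat.find hex with hm₀def
    have hm₀le : m₀ ≤ m := Nat.find_le hlast
    have hm₀min : ∀ k, k < m₀ → ¬ (lastLoc (g k) = true) := fun k hk => Nat.find_min hex hk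
    have hm₀pos : 1 ≤ m₀ := by
      rcases Nat.eq_zero_or_pos m₀ with h | h
      · exfalso
        rw [h, h0] at hm₀P
        have : lastLoc (hn (n+1)) = false := foldl_replicate_false n false
        rw [this] at hm₀P; exact Bool.false_ne_true hm₀P
      · exact h
    obtain ⟨m₁, hm₁⟩ : ∃ m₁, m₀ = m₁ + 1 := ⟨m₀ - 1, by omega⟩
    have hst : GRel (g m₁) (g m₀) := by
      have := hstep m₁ (by omega)
      rwa [← hm₁] at this
    have hlast₁ : lastLoc (g m₁) = false := by
      have := hm₀min m₁ (by omega)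
      cases hL : lastLoc (g m₁)
      · rfl
      · exact absurd hL this
    -- the step into m₀ must be a human step with all actions true
    have hQm₁ : (g m₁).2.getLastD false = true := by
      rcases hst with hh | ha
      · -- human step
        have hne : List.foldl step (g m₁).1 (g m₁).2 ≠ List.foldl step (g m₀).1 (g m₁).2 := by
          have h2 : lastLoc (g m₀) = List.foldl step (g m₀).1 (g m₁).2 := by
            show List.foldl step (g m₀).1 (g m₀).2 = _
            rw [← hh]
          simp only [lastLoc] at hlast₁
          rw [hlast₁, ← h2, hm₀P]
          exact Bool.false_ne_true
        have hnf : ¬ (false ∈ (g m₁).2) := fun hmem => hne (foldl_false _ _ _ hmem)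
        obtain ⟨F, c, hFc, _⟩ := hdec m₁ (by omega)
        rw [hFc, List.getLastD_concat]
        cases c with
        | false => exact absurd (by rw [hFc]; exact List.mem_append_right _ (List.mem_singleton.mpr rfl)) hnf
        | true => rfl
      · -- ai step preserves lastLoc : contradiction
        exfalso
        have := (scanl_inj _ _ _ _ ha).2.2
        simp only [lastLoc] at hlast₁ hm₀P
        rw [hlast₁, hm₀P] at this
        exact Bool.false_ne_true this
    -- τ : first time the last action is true
    have hexQ : ∃ i, (g i).2.getLastD false = true := ⟨m₁, hQm₁⟩
    have hτP : (g (Nat.find hexQ)).2.getLastD false = true := Nat.find_spec hexQ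
    set τ := Nat.find hexQ with hτdef
    have hτle : τ ≤ m₁ := Nat.find_le hQm₁
    have hτmin : ∀ k, k < τ → ¬ ((g k).2.getLastD false = true) := fun k hk => Nat.find_min hexQ hk
    have hτpos : 1 ≤ τ := by
      rcases Nat.eq_zero_or_pos τ with h | h
      · exfalso
        rw [h, h0] at hτP
        rw [show (hn (n+1)).2 = List.replicate n false ++ [false] from by
          simp [hn, List.replicate_succ']] at hτP
        rw [List.getLastD_concat] at hτP
        exact Bool.false_ne_true hτP
      · exact h
    obtain ⟨τ₁, hτ₁⟩ : ∃ τ₁, τ = τ₁ + 1 := ⟨τ - 1, by omega⟩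
    have hstτ : GRel (g τ₁) (g τ) := by
      have := hstep τ₁ (by omega)
      rwa [← hτ₁] at this
    have hQτ₁ : (g τ₁).2.getLastD false = false := by
      have := hτmin τ₁ (by omega)
      cases hL : (g τ₁).2.getLastD false
      · rfl
      · exact absurd hL this
    obtain ⟨F₁, c₁, hF₁, hF₁len⟩ := hdec τ₁ (by omega)
    obtain ⟨F₂, c₂, hF₂, hF₂len⟩ := hdec τ (by omega)
    have hc₁ : c₁ = false := by rw [hF₁, List.getLastD_concat] at hQτ₁; exact hQτ₁
    have hc₂ : c₂ = true := by rw [hF₂, List.getLastD_concat] at hτP; exact hτP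
    have haiτ : aiInd (g τ₁) (g τ) := by
      rcases hstτ with hh | ha
      · exfalso
        rw [humanInd, hF₁, hF₂] at hh
        have := (List.append_inj hh (by omega)).2
        simp [hc₁, hc₂] at this
      · exact ha
    -- extract info from the ai step
    have hkey := ai_decomp F₁ F₂ (g τ₁).1 (g τ).1 c₁ c₂ (by omega)
      (by rw [aiInd, locSeq, locSeq, hF₁, hF₂] at haiτ; exact haiτ)
    have hL₂ : List.foldl step (g τ).1 F₂ = true := by
      have := hkey.2
      rw [hc₁, hc₂] at this
      simp only [step, if_false, if_true] at this
      cases hL : List.foldl step (g τ).1 F₂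
      · rw [hL] at this; simp at this
      · rfl
    have hL₁ : List.foldl step (g τ₁).1 F₁ = true := by
      rw [(scanl_inj _ _ _ _ hkey.1).2.2]; exact hL₂
    -- projected chain
    have hih : 2 * n + 1 ≤ τ₁ := by
      refine ih τ₁ (fun i => ((g i).1, (g i).2.dropLast)) ?_ ?_ ?_
      · show ((g 0).1, (g 0).2.dropLast) = hn n
        rw [h0]
        show ((false : Bool), (List.replicate (n+1) false).dropLast) = hn n
        rw [List.replicate_succ', List.dropLast_concat]
        rfl
      · intro i hi
        rcases hstep i (by omega) with hh | ha
        · exact Or.inl (by show (g i).2.dropLast = (g (i+1)).2.dropLast; rw [hh])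
        · right
          obtain ⟨A, a, hA, hAlen⟩ := hdec i (by omega)
          obtain ⟨B, b2, hB, hBlen⟩ := hdec (i+1) (by omega)
          have hk := ai_decomp A B (g i).1 (g (i+1)).1 a b2 (by omega)
            (by rw [aiInd, locSeq, locSeq, hA, hB] at ha; exact ha)
          show List.scanl step (g i).1 ((g i).2.dropLast)
            = List.scanl step (g (i+1)).1 ((g (i+1)).2.dropLast)
          rw [hA, hB, List.dropLast_concat, List.dropLast_concat]
          exact hk.1
      · show List.foldl step (g τ₁).1 ((g τ₁).2.dropLast) = true
        rw [hF₁, List.dropLast_concat]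
        exact hL₁
    omega

/-- the minimal number of `GRel`-steps from `hn n` to a history
    with last location On is exactly `2n+1`. -/
theorem stmt2 (n : ℕ) :
    (∃ g : ℕ → Hist, g 0 = hn n ∧
      (∀ i < 2 * n + 1, GRel (g i) (g (i + 1))) ∧
      lastLoc (g (2 * n + 1)) = true) ∧
    (∀ (m : ℕ) (g : ℕ → Hist), g 0 = hn n →
      (∀ i < m, GRel (g i) (g (i + 1))) →
      lastLoc (g m) = true → 2 * n + 1 ≤ m) := by
  constructor
  · refine ⟨fun i => (decide ((i + i / 2) % 2 = 1),
      List.replicate (i / 2) true ++ List.replicate (n - i / 2) false), ?_, ?_, ?_⟩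
    · simp [hn]
    · intro i hi
      rcases Nat.mod_two_eq_zero_or_one i with h2 | h2
      · left
        show List.replicate (i / 2) true ++ List.replicate (n - i / 2) false
          = List.replicate ((i+1) / 2) true ++ List.replicate (n - (i+1) / 2) false
        have : (i+1)/2 = i/2 := by omega
        rw [this]
      · right
        show List.scanl step (decide ((i + i / 2) % 2 = 1))
            (List.replicate (i / 2) true ++ List.replicate (n - i / 2) false)
          = List.scanl step (decide (((i+1) + (i+1) / 2) % 2 = 1))
            (List.replicate ((i+1) / 2) true ++ List.replicate (n - (i+1) / 2) false)
        have hb1 : decide ((i + i / 2) % 2 = 1) = decide ((i/2) % 2 = 0) :=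
          decide_eq_decide.mpr (by omega)
        have h3 : (i+1)/2 = i/2 + 1 := by omega
        have hb2 : decide (((i+1) + (i+1) / 2) % 2 = 1) = decide ((i/2) % 2 = 0) :=
          decide_eq_decide.mpr (by omega)
        obtain ⟨k, hk⟩ : ∃ k, n - i/2 = k + 1 := ⟨n - i/2 - 1, by omega⟩
        have h5 : n - (i/2 + 1) = k := by omega
        rw [hb1, hb2, h3, h5, hk]
        exact chain_ai (i/2) k
    · show List.foldl step (decide ((2*n+1 + (2*n+1) / 2) % 2 = 1))
        (List.replicate ((2*n+1) / 2) true ++ List.replicate (n - (2*n+1) / 2) false) = true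
      have h1 : (2*n+1)/2 = n := by omega
      have h2 : decide ((2*n+1 + n) % 2 = 1) = decide (n % 2 = 0) :=
        decide_eq_decide.mpr (by omega)
      rw [h1, h2, Nat.sub_self]
      simpa using foldl_alt n
  · exact lower n
end

section
/- Model update preserves within-action relations: for any two histories h, h' of the same length n, (i) h·r is Human-indistinguishable from h'·r iff h is Human-indistinguishable from h', and the same holds with r replaced by t; (ii) h·r is AI-indistinguishable from h'·r iff h is AI-indistinguishable from h', and h·t is AI-indistinguishable from h'·t iff h is AI-indistinguishable from h' and last h = last h'. -/
lemma scanl_snoc (f : Bool → Bool → Bool) (b a : Bool) (l : List Bool) :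
    List.scanl f b (l ++ [a]) = List.scanl f b l ++ [f (List.foldl f b l) a] := by
  induction l generalizing b with
  | nil => simp [List.scanl]
  | cons x xs ih => simp [List.scanl_cons, ih]

lemma locSeq_ext (h : Hist) (a : Bool) :
    locSeq (ext h a) = locSeq h ++ [step (lastLoc h) a] := by
  simp [locSeq, ext, lastLoc, scanl_snoc]

/-- model update preserves within-action relations.
    (`false` = reset `r`, `true` = toggle `t`.) -/
theorem stmt5 (n : ℕ) (h h' : Hist) (hl : h.2.length = n) (hl' : h'.2.length = n) :
    (humanInd (ext h false) (ext h' false) ↔ humanInd h h') ∧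
    (humanInd (ext h true) (ext h' true) ↔ humanInd h h') ∧
    (aiInd (ext h false) (ext h' false) ↔ aiInd h h') ∧
    (aiInd (ext h true) (ext h' true) ↔ aiInd h h' ∧ lastLoc h = lastLoc h') := by
  refine ⟨?_, ?_, ?_, ?_⟩
  · simp [humanInd, ext]
  · simp [humanInd, ext]
  · simp [aiInd, locSeq_ext, step]
  · simp only [aiInd, locSeq_ext]
    constructor
    · intro hE
      obtain ⟨h1, h2⟩ := List.append_inj' hE (by simp)
      exact ⟨h1, by simpa [step] using h2⟩
    · rintro ⟨h1, h2⟩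
      rw [h1, h2]
end

section
/- The history h_n = (Off, rⁿ) is an endpoint of the indistinguishability structure: its AI-equivalence class is the singleton {h_n} (no other history of length n has the all-Off location sequence), and the only history of length n distinct from h_n and related to h_n by R is (On, rⁿ). Hence h_n has exactly one R-neighbor other than itself. -/
lemma scanl_allfalse : ∀ (as : List Bool) (l : Bool),
    List.scanl step l as = List.replicate (as.length + 1) false →
    l = false ∧ as = List.replicate as.length false := by
  intro as
  induction as with
  | nil => intro l h; simp [List.scanl] at h; simp [h]
  | cons a t ih =>
    intro l h
    simp only [List.scanl_cons, List.length_cons, List.replicate_succ, List.cons.injEq] at h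
    obtain ⟨hl, ht⟩ := h
    subst hl
    rw [show step false a = a from by cases a <;> rfl] at ht
    obtain ⟨ha, hrest⟩ := ih a ht
    subst ha
    refine ⟨rfl, ?_⟩
    conv_lhs => rw [hrest]
    simp [List.replicate_succ]

lemma locSeq_hn (n : ℕ) : locSeq (hn n) = List.replicate (n + 1) false := by
  induction n with
  | zero => rfl
  | succ k ih =>
    simp only [locSeq, hn, List.replicate_succ, List.scanl_cons] at ih ⊢
    rw [show step false false = false from rfl]
    exact congrArg (List.cons false) ih

lemma ai_single (n : ℕ) : ∀ g : Hist, g.2.length = n → aiInd g (hn n) → g = hn n := by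
  rintro ⟨l, as⟩ hlen hai
  have h : List.scanl step l as = List.replicate (as.length + 1) false := by
    simp only [aiInd, locSeq_hn] at hai
    simpa [locSeq, hlen] using hai
  obtain ⟨h1, h2⟩ := scanl_allfalse as l h
  subst h1
  rw [show as = List.replicate n false from by rw [h2, hlen]]
  rfl

/-- `hn n` is an endpoint: its AI-equivalence class is a singleton,
    and its only `GRel`-neighbor other than itself is `(On, rⁿ)`. -/
theorem stmt8 (n : ℕ) :
    (∀ g : Hist, g.2.length = n → aiInd g (hn n) → g = hn n) ∧
    (∀ g : Hist, g.2.length = n → g ≠ hn n → GRel (hn n) g →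
      g = (true, List.replicate n false)) ∧
    GRel (hn n) (true, List.replicate n false) ∧
    (true, List.replicate n false) ≠ hn n := by
  refine ⟨ai_single n, ?_, Or.inl rfl, ?_⟩
  · rintro ⟨l, as⟩ hlen hne hrel
    rcases hrel with h | h
    · have has : as = List.replicate n false := h.symm
      subst has
      cases l
      · exact absurd rfl hne
      · rfl
    · exact absurd (ai_single n (l, as) hlen h.symm) hne
  · intro h
    exact Bool.noConfusion (congrArg Prod.fst h)
end

section
/- Knowledge asymmetry along the reset sequence: for every n ≥ 1, at the history h_n = (Off, rⁿ) both agents know Off holds — every history Human-indistinguishable from h_n has last location Off, and every history AI-indistinguishable from h_n has last location Off (so E Off holds at h_n) — yet E^{2n+1} Off fails at h_n, so the iterated mutual-knowledge hierarchy breaks at level 2n+1. -/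
/- auxiliary lemmas -/

lemma scanl_cons (l a : Bool) (as : List Bool) :
    List.scanl step l (a :: as) = l :: List.scanl step (step l a) as := List.scanl_cons

lemma foldl_step_false (m : ℕ) : List.foldl step false (List.replicate m false) = false := by
  induction m with
  | zero => rfl
  | succ m ih => simpa [List.replicate_succ, step] using ih

lemma foldl_step_resets (l : Bool) (m : ℕ) :
    List.foldl step l (List.replicate (m+1) false) = false := by
  simp [List.replicate_succ, step, foldl_step_false]

lemma scanl_step_resets (l : Bool) (m : ℕ) :
    List.scanl step l (List.replicate m false) = l :: List.replicate m false := by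
  induction m generalizing l with
  | zero => rfl
  | succ m ih =>
      rw [List.replicate_succ, scanl_cons, show step l false = false from rfl, ih false]

lemma foldl_step_toggles (l : Bool) (k : ℕ) :
    List.foldl step l (List.replicate k true) = xor l (Nat.bodd k) := by
  induction k generalizing l with
  | zero => cases l <;> rfl
  | succ k ih =>
      simp only [List.replicate_succ, List.foldl]
      rw [show step l true = !l from rfl, ih (!l), Nat.bodd_succ]
      cases l <;> cases h : Nat.bodd k <;> simp

lemma getLast?_scanl (as : List Bool) (l : Bool) :
    (List.scanl step l as).getLast? = some (List.foldl step l as) := by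
  induction as generalizing l with
  | nil => rfl
  | cons a as ih =>
      rw [scanl_cons]
      cases as with
      | nil => rfl
      | cons b bs =>
          rw [show List.scanl step (step l a) (b :: bs)
              = (step l a) :: List.scanl step (step (step l a) b) bs from List.scanl_cons,
            List.getLast?_cons_cons]
          rw [← List.scanl_cons]
          exact ih (step l a)

lemma lastLoc_eq_getLast? (h : Hist) : (locSeq h).getLast? = some (lastLoc h) :=
  getLast?_scanl h.2 h.1

lemma ai_step (k : ℕ) (m : Bool) (j : ℕ) (hm : xor m (Nat.bodd k) = true) :
    locSeq (m, List.replicate k true ++ List.replicate (j+1) false) =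
    locSeq (m, List.replicate (k+1) true ++ List.replicate j false) := by
  induction k generalizing m with
  | zero =>
      have hm' : m = true := by simpa using hm
      subst hm'
      show List.scanl step true (List.replicate 0 true ++ List.replicate (j+1) false)
          = List.scanl step true (List.replicate (0+1) true ++ List.replicate j false)
      simp only [List.replicate_succ, List.replicate_zero, List.nil_append, List.cons_append,
        scanl_cons, show step true false = false from rfl, show step true true = false from rfl,
        scanl_step_resets]
  | succ k ih =>
      have hm' : xor (!m) (Nat.bodd k) = true := by
        rw [Nat.bodd_succ] at hm
        cases m <;> cases h : Nat.bodd k <;> simp_all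
      show List.scanl step m (List.replicate (k+1) true ++ List.replicate (j+1) false)
          = List.scanl step m (List.replicate (k+1+1) true ++ List.replicate j false)
      rw [show List.replicate (k+1) true = true :: List.replicate k true from List.replicate_succ (a := true) (n := k),
        show List.replicate (k+1+1) true = true :: List.replicate (k+1) true from
          List.replicate_succ (a := true) (n := k+1),
        List.cons_append, List.cons_append, scanl_cons, scanl_cons,
        show step m true = !m from rfl]
      exact congrArg (List.cons m) (ih (!m) hm')

lemma reachLe_snoc {k : ℕ} {h g g' : Hist} (hr : reachLe k h g) (hs : GRel g g') :
    reachLe (k+1) h g' := by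
  induction k generalizing h with
  | zero =>
      cases hr
      exact Or.inr ⟨g', hs, rfl⟩
  | succ k ih =>
      cases hr with
      | inl hr => exact Or.inl (ih hr)
      | inr hr =>
          obtain ⟨h', hg, hr⟩ := hr
          exact Or.inr ⟨h', hg, ih hr⟩

lemma chain (n : ℕ) : ∀ k, k ≤ n →
    reachLe (2*k) (hn n) (Nat.bodd k, List.replicate k true ++ List.replicate (n-k) false) := by
  intro k
  induction k with
  | zero => intro _; simp [reachLe, hn]
  | succ k ih =>
      intro hk
      have hk' : k ≤ n := Nat.le_of_succ_le hk
      have h1 := ih hk'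
      have hs1 : GRel (Nat.bodd k, List.replicate k true ++ List.replicate (n-k) false)
          (!Nat.bodd k, List.replicate k true ++ List.replicate (n-k) false) :=
        Or.inl rfl
      have hnk : n - k = (n - (k+1)) + 1 := by omega
      have hs2 : GRel (!Nat.bodd k, List.replicate k true ++ List.replicate (n-k) false)
          (Nat.bodd (k+1), List.replicate (k+1) true ++ List.replicate (n-(k+1)) false) := by
        refine Or.inr ?_
        show locSeq _ = locSeq _
        rw [hnk, show Nat.bodd (k+1) = !Nat.bodd k from Nat.bodd_succ k]
        exact ai_step k (!Nat.bodd k) (n-(k+1)) (by cases Nat.bodd k <;> rfl)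
      have h3 := reachLe_snoc (reachLe_snoc h1 hs1) hs2
      rw [show 2*(k+1) = 2*k + 1 + 1 by ring]
      exact h3

/-- knowledge asymmetry along the reset sequence: at `hn n` (n ≥ 1)
    both agents know Off (so `E Off` holds), yet `E^{2n+1} Off` fails. -/
theorem stmt14 (n : ℕ) (hpos : 1 ≤ n) :
    (∀ g : Hist, humanInd g (hn n) → lastLoc g = false) ∧
    (∀ g : Hist, aiInd g (hn n) → lastLoc g = false) ∧
    (∀ g : Hist, reachLe 1 (hn n) g → lastLoc g = false) ∧
    ¬ (∀ g : Hist, reachLe (2 * n + 1) (hn n) g → lastLoc g = false) := by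
  obtain ⟨m, rfl⟩ : ∃ m, n = m + 1 := ⟨n - 1, by omega⟩
  have hhuman : ∀ g : Hist, humanInd g (hn (m+1)) → lastLoc g = false := by
    intro g hg
    have h2 : g.2 = List.replicate (m+1) false := hg
    rw [lastLoc, h2]
    exact foldl_step_resets g.1 m
  have hlast : lastLoc (hn (m+1)) = false := hhuman _ rfl
  have hai : ∀ g : Hist, aiInd g (hn (m+1)) → lastLoc g = false := by
    intro g hg
    have h1 := lastLoc_eq_getLast? g
    have h2 := lastLoc_eq_getLast? (hn (m+1))
    rw [hg, h2] at h1
    rw [← hlast]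
    exact (Option.some_injective _ h1.symm)
  refine ⟨hhuman, hai, ?_, ?_⟩
  · intro g hg
    cases hg with
    | inl hg => cases hg; exact hlast
    | inr hg =>
        obtain ⟨h', hgr, heq⟩ := hg
        cases heq
        cases hgr with
        | inl hgr => exact hhuman _ hgr.symm
        | inr hgr => exact hai _ hgr.symm
  · intro hall
    have h1 := chain (m+1) (m+1) le_rfl
    simp only [Nat.sub_self, List.replicate_zero, List.append_nil] at h1
    have hs : GRel (Nat.bodd (m+1), List.replicate (m+1) true)
        (!Nat.bodd (m+1), List.replicate (m+1) true) := Or.inl rfl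
    have h2 := reachLe_snoc h1 hs
    have h3 := hall _ h2
    rw [lastLoc] at h3
    simp only at h3
    rw [foldl_step_toggles] at h3
    cases h : Nat.bodd (m+1) <;> rw [h] at h3 <;> simp at h3
end
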